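/- Let k ∈ {0,1} and let u, v, w be positive integers. Then, with φ and ε as above and Δ = σ₁σ₂σ₁: tr(Δ²ᵏ σ₁⁻¹ σ₂ᵘ σ₁⁻ᵛ σ₂ʷ) = (-1)ᵏ (2 + (u+w)(1+v) + uvw) and ε(Δ²ᵏ σ₁⁻¹ σ₂ᵘ σ₁⁻ᵛ σ₂ʷ) = u + w - v - 1 + 6k. -/

import Mathlib

open Matrix

abbrev SL2Z := Matrix.SpecialLinearGroup (Fin 2) ℤ

def braidRels : Set (FreeGroup Bool) :=
  {FreeGroup.of true * FreeGroup.of false * FreeGroup.of true *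
    (FreeGroup.of false * FreeGroup.of true * FreeGroup.of false)⁻¹}

abbrev B3 := PresentedGroup braidRels

def σ₁ : B3 := PresentedGroup.of true
def σ₂ : B3 := PresentedGroup.of false
def Δ : B3 := σ₁ * σ₂ * σ₁

def S : SL2Z := ⟨!![1, 1; 0, 1], by norm_num [Matrix.det_fin_two_of]⟩
def T : SL2Z := ⟨!![1, 0; -1, 1], by norm_num [Matrix.det_fin_two_of]⟩

lemma STS_eq_TST : S * T * S = T * S * T := by
  ext i j
  simp only [Matrix.SpecialLinearGroup.coe_mul]
  fin_cases i <;> fin_cases j <;>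
    simp [S, T, Matrix.mul_apply, Fin.sum_univ_succ]

def φ : B3 →* SL2Z :=
  PresentedGroup.toGroup (f := fun b => if b then S else T) (by
    intro r hr
    simp only [braidRels, Set.mem_singleton_iff] at hr
    subst hr
    simp only [_root_.map_mul, _root_.map_inv, FreeGroup.lift_apply_of, if_true, if_false]
    rw [mul_inv_eq_one]
    exact STS_eq_TST)

def ε : B3 →* Multiplicative ℤ :=
  PresentedGroup.toGroup (f := fun _ => Multiplicative.ofAdd (1 : ℤ)) (by
    intro r hr
    simp only [braidRels, Set.mem_singleton_iff] at hr
    subst hr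
    simp only [_root_.map_mul, _root_.map_inv, FreeGroup.lift_apply_of]
    group)

def expSum (g : B3) : ℤ := Multiplicative.toAdd (ε g)

def trB (g : B3) : ℤ := Matrix.trace (φ g : Matrix (Fin 2) (Fin 2) ℤ)

lemma φ_σ₁ : φ σ₁ = S := by
  simp [φ, σ₁, PresentedGroup.toGroup.of]

lemma φ_σ₂ : φ σ₂ = T := by
  simp [φ, σ₂, PresentedGroup.toGroup.of]

lemma ε_σ₁ : ε σ₁ = Multiplicative.ofAdd (1 : ℤ) := by
  simp [ε, σ₁, PresentedGroup.toGroup.of]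

lemma ε_σ₂ : ε σ₂ = Multiplicative.ofAdd (1 : ℤ) := by
  simp [ε, σ₂, PresentedGroup.toGroup.of]

lemma SL2Z_val_mul (A B : SL2Z) :
    Subtype.val (A * B) = Subtype.val A * Subtype.val B := rfl

def Sinv : SL2Z := ⟨!![1, -1; 0, 1], by norm_num [Matrix.det_fin_two_of]⟩

lemma S_inv_eq : S⁻¹ = Sinv := by
  rw [inv_eq_iff_mul_eq_one]
  ext i j
  simp only [Matrix.SpecialLinearGroup.coe_mul]
  fin_cases i <;> fin_cases j <;>
    simp [S, Sinv, Matrix.mul_apply, Fin.sum_univ_succ]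

lemma Sinv_pow (n : ℕ) :
    ((Sinv ^ n : SL2Z) : Matrix (Fin 2) (Fin 2) ℤ) = !![1, -(n : ℤ); 0, 1] := by
  induction n with
  | zero => simp [Matrix.one_fin_two]
  | succ n ih =>
    rw [pow_succ]
    simp only [SL2Z_val_mul]
    rw [ih]
    ext i j
    fin_cases i <;> fin_cases j <;>
      simp [Sinv, Matrix.mul_apply, Fin.sum_univ_succ] <;> push_cast <;> ring

lemma T_pow (n : ℕ) :
    ((T ^ n : SL2Z) : Matrix (Fin 2) (Fin 2) ℤ) = !![1, 0; -(n : ℤ), 1] := by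
  induction n with
  | zero => simp [Matrix.one_fin_two]
  | succ n ih =>
    rw [pow_succ]
    simp only [SL2Z_val_mul]
    rw [ih]
    ext i j
    fin_cases i <;> fin_cases j <;>
      simp [T, Matrix.mul_apply, Fin.sum_univ_succ] <;> push_cast <;> ring

lemma Δ_sq : φ Δ ^ 2 = -1 := by
  rw [Δ, _root_.map_mul, _root_.map_mul, φ_σ₁, φ_σ₂]
  ext i j
  simp only [pow_two, SL2Z_val_mul]
  fin_cases i <;> fin_cases j <;>
    simp [S, T, pow_two, Matrix.mul_apply, Fin.sum_univ_succ]

/-- Trace and exponent sum of Δ²ᵏ σ₁⁻¹ σ₂ᵘ σ₁⁻ᵛ σ₂ʷ for k ∈ {0,1} and positive u, v, w. -/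
theorem stmt15 (k u v w : ℕ) (hk : k = 0 ∨ k = 1)
    (hu : 0 < u) (hv : 0 < v) (hw : 0 < w) :
    trB (Δ ^ (2 * k) * σ₁⁻¹ * σ₂ ^ u * σ₁ ^ (-(v : ℤ)) * σ₂ ^ w) =
      (-1) ^ k * (2 + ((u : ℤ) + w) * (1 + v) + u * v * w) ∧
    expSum (Δ ^ (2 * k) * σ₁⁻¹ * σ₂ ^ u * σ₁ ^ (-(v : ℤ)) * σ₂ ^ w) =
      (u : ℤ) + w - v - 1 + 6 * k := by
  have h1 : φ (Δ ^ (2 * k) * σ₁⁻¹ * σ₂ ^ u * σ₁ ^ (-(v : ℤ)) * σ₂ ^ w) =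
      (φ Δ ^ 2) ^ k * Sinv * T ^ u * Sinv ^ v * T ^ w := by
    simp only [_root_.map_mul, map_pow, map_zpow, map_inv, φ_σ₁, φ_σ₂, _root_.zpow_neg,
      zpow_natCast, ← inv_pow, S_inv_eq, pow_mul]
  constructor
  · rw [trB, h1, Δ_sq]
    rcases hk with h | h <;> subst h
    · rw [pow_zero, one_mul]
      simp only [SL2Z_val_mul]
      rw [Sinv_pow, T_pow, T_pow,
        show ((Sinv : SL2Z) : Matrix (Fin 2) (Fin 2) ℤ) = !![1, -1; 0, 1] from rfl]
      simp [Matrix.mul_fin_two, Matrix.trace_fin_two_of]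
      ring
    · rw [pow_one]
      simp only [SL2Z_val_mul]
      rw [Sinv_pow, T_pow, T_pow,
        show ((Sinv : SL2Z) : Matrix (Fin 2) (Fin 2) ℤ) = !![1, -1; 0, 1] from rfl,
        show (((-1 : SL2Z) : SL2Z) : Matrix (Fin 2) (Fin 2) ℤ) = -1 from by
          ext i j; fin_cases i <;> fin_cases j <;> simp]
      simp [Matrix.mul_fin_two, Matrix.trace_fin_two_of, Matrix.neg_mul]
      ring
  · rw [expSum]
    simp only [_root_.map_mul, map_pow, map_zpow, map_inv, Δ, ε_σ₁, ε_σ₂,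
      toAdd_mul, toAdd_pow, toAdd_zpow, toAdd_inv, toAdd_ofAdd, smul_eq_mul]
    push_cast
    ring
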